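/- arXiv:1302.5656 — 5 statements merged into one kernel-verified Lean document; each statement's English description precedes it below -/
import Mathlib

section
/- A countable family F = {F_n : n ∈ ℕ} of subsets of a compact metric space (X, d) is vanishing (i.e., for each open cover U of X, the subfamily of members of F not contained in any element of U is locally finite) if and only if lim_{n→∞} diam(F_n) = 0. -/
open Metric Set Filter

/-- A countable family `F` of subsets of a compact metric space is vanishing
(for each open cover `U`, the subfamily of members not contained in any element
of `U` is locally finite) iff `diam (F n) → 0`. -/
theorem stmt0 {X : Type*} [MetricSpace X] [CompactSpace X] (F : ℕ → Set X) :
    (∀ U : Set (Set X), (∀ u ∈ U, IsOpen u) → ⋃₀ U = Set.univ →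
      ∀ x : X, ∃ V ∈ nhds x,
        {n : ℕ | (∀ u ∈ U, ¬ F n ⊆ u) ∧ (F n ∩ V).Nonempty}.Finite) ↔
    Filter.Tendsto (fun n => Metric.diam (F n)) Filter.atTop (nhds 0) := by
  constructor
  · intro h
    rw [Metric.tendsto_atTop]
    intro ε hε
    set U : Set (Set X) := Set.range (fun x : X => ball x (ε/3)) with hU
    have hUo : ∀ u ∈ U, IsOpen u := by
      rintro u ⟨x, rfl⟩; exact isOpen_ball
    have hUc : ⋃₀ U = Set.univ := by
      apply Set.eq_univ_of_forall
      intro x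
      exact ⟨ball x (ε/3), ⟨x, rfl⟩, mem_ball_self (by linarith)⟩
    choose V hV hfin using h U hUo hUc
    obtain ⟨t, ht⟩ := isCompact_univ.elim_nhds_subcover V (fun x _ => hV x)
    have hbad : ({n : ℕ | (∀ u ∈ U, ¬ F n ⊆ u) ∧ (F n).Nonempty} : Set ℕ).Finite := by
      apply Set.Finite.subset (Set.Finite.biUnion t.finite_toSet (fun x _ => hfin x))
      rintro n ⟨hn1, y, hy⟩
      have : y ∈ ⋃ x ∈ t, V x := ht.2 (mem_univ y)
      obtain ⟨x, hx, hyx⟩ := mem_iUnion₂.mp this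
      exact mem_iUnion₂.mpr ⟨x, hx, hn1, y, hy, hyx⟩
    obtain ⟨N, hN⟩ := hbad.bddAbove
    refine ⟨N + 1, fun n hn => ?_⟩
    have hdiam : diam (F n) < ε := by
      rcases Set.eq_empty_or_nonempty (F n) with he | hne
      · rw [he, diam_empty]; exact hε
      · by_cases hc : ∃ u ∈ U, F n ⊆ u
        · obtain ⟨u, ⟨x, rfl⟩, hsub⟩ := hc
          calc diam (F n) ≤ diam (ball x (ε/3)) :=
                diam_mono hsub isBounded_ball
            _ ≤ 2 * (ε/3) := diam_ball (by linarith)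
            _ < ε := by linarith
        · push_neg at hc
          have : n ∈ ({n : ℕ | (∀ u ∈ U, ¬ F n ⊆ u) ∧ (F n).Nonempty} : Set ℕ) :=
            ⟨hc, hne⟩
          have := hN this
          omega
    rw [Real.dist_eq, sub_zero, abs_of_nonneg diam_nonneg]
    exact hdiam
  · intro h U hUo hUc x
    obtain ⟨δ, hδ, hlb⟩ := lebesgue_number_lemma_of_metric_sUnion isCompact_univ hUo
      (by rw [hUc])
    obtain ⟨N, hN⟩ := Metric.tendsto_atTop.mp h δ hδ
    refine ⟨Set.univ, Filter.univ_mem, Set.Finite.subset (Set.finite_Iio N) ?_⟩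
    rintro n ⟨hn1, y, hy, -⟩
    by_contra hge
    simp only [Set.mem_Iio, not_lt] at hge
    have hd : diam (F n) < δ := by
      have := hN n (by simpa [Set.mem_Iio, not_lt] using hge)
      rwa [Real.dist_eq, sub_zero, abs_of_nonneg diam_nonneg] at this
    obtain ⟨u, hu, hsub⟩ := hlb y (mem_univ y)
    refine hn1 u hu (fun z hz => hsub ?_)
    have hb : Bornology.IsBounded (F n) :=
      isCompact_univ.isBounded.subset (subset_univ _)
    exact mem_ball.mpr (lt_of_le_of_lt (dist_le_diam_of_mem hb hz hy) hd)
end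

section
/- For every upper semicontinuous decomposition D of a metrizable space X, the decomposition space X/D is metrizable. -/
open Set Function Metric TopologicalSpace

section
variable {X Y : Type*} [MetricSpace X] [TopologicalSpace Y] {q : X → Y}

/-- The "saturation interior" operator for a map `q`. -/
def qsh (q : X → Y) (U : Set X) : Set Y := {y | q ⁻¹' {y} ⊆ U}

theorem qsh_open (hqm : IsClosedMap q) {U : Set X} (hU : IsOpen U) : IsOpen (qsh q U) := by
  have : qsh q U = (q '' Uᶜ)ᶜ := by
    ext y
    constructor
    · intro h hy
      obtain ⟨x, hx, rfl⟩ := hy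
      exact hx (h rfl)
    · intro h x hx
      by_contra hxU
      exact h ⟨x, hxU, hx⟩
  rw [this]
  exact (hqm _ hU.isClosed_compl).isOpen_compl


theorem loc_fin_aux {ι : Type*} {B : ι → Set X} (hB : LocallyFinite B) {K : Set X}
    (hK : IsCompact K) : ∃ W : Set X, IsOpen W ∧ K ⊆ W ∧ {i | (B i ∩ W).Nonempty}.Finite := by
  have h : ∀ x : X, ∃ N : Set X, IsOpen N ∧ x ∈ N ∧ {i | (B i ∩ N).Nonempty}.Finite := by
    intro x
    obtain ⟨N, hN, hfin⟩ := hB x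
    obtain ⟨N', hN'N, hN'o, hxN'⟩ := _root_.mem_nhds_iff.1 hN
    exact ⟨N', hN'o, hxN', hfin.subset fun i hi => hi.mono (inter_subset_inter_right _ hN'N)⟩
  choose N hNo hxN hNf using h
  obtain ⟨t, ht⟩ := hK.elim_finite_subcover N hNo (fun x hx => mem_iUnion.2 ⟨x, hxN x⟩)
  refine ⟨⋃ x ∈ t, N x, isOpen_biUnion fun x _ => hNo x, ht, ?_⟩
  refine (t.finite_toSet.biUnion fun x _ => hNf x).subset ?_
  rintro i ⟨z, hzB, hzW⟩
  simp only [mem_iUnion] at hzW ⊢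
  obtain ⟨x, hxt, hzx⟩ := hzW
  exact ⟨x, hxt, z, hzB, hzx⟩


theorem push_loc_fin {ι : Type*} {B : ι → Set X} (hB : LocallyFinite B)
    (hqm : IsClosedMap q) (hqf : ∀ y, IsCompact (q ⁻¹' {y})) :
    LocallyFinite (fun i => q '' B i) := by
  intro y
  obtain ⟨W, hWo, hWK, hWf⟩ := loc_fin_aux hB (hqf y)
  refine ⟨qsh q W, (qsh_open hqm hWo).mem_nhds hWK, hWf.subset ?_⟩
  rintro i ⟨z, ⟨x, hxB, rfl⟩, hz⟩
  exact ⟨x, hxB, hz rfl⟩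

theorem normalY (hqc : Continuous q) (hqs : Surjective q) (hqm : IsClosedMap q) :
    NormalSpace Y := by
  constructor
  intro s t hs ht hd
  obtain ⟨U, V, hUo, hVo, hsU, htV, hUV⟩ :=
    normal_separation (hs.preimage hqc) (ht.preimage hqc) (hd.preimage q)
  refine ⟨qsh q U, qsh q V, qsh_open hqm hUo, qsh_open hqm hVo, ?_, ?_, ?_⟩
  · intro y hy x hx
    exact hsU (by simpa [mem_preimage, mem_singleton_iff.1 hx] using hy)
  · intro y hy x hx
    exact htV (by simpa [mem_preimage, mem_singleton_iff.1 hx] using hy)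
  · rw [disjoint_left]
    intro y hyU hyV
    obtain ⟨x, rfl⟩ := hqs y
    exact (disjoint_left.1 hUV) (hyU rfl) (hyV rfl)

/-- a continuous function positive exactly on a given open set -/

theorem pos_on_open (hqc : Continuous q) (hqs : Surjective q) (hqm : IsClosedMap q)
    {O : Set Y} (hO : IsOpen O) :
    ∃ g : Y → ℝ, Continuous g ∧ (∀ y, 0 ≤ g y) ∧ (∀ y, g y ≤ 1) ∧ {y | 0 < g y} = O := by
  have hN : NormalSpace Y := normalY hqc hqs hqm
  by_cases huniv : O = univ
  · exact ⟨fun _ => 1, continuous_const, fun _ => zero_le_one, fun _ => le_refl 1, by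
      simp [huniv]⟩
  -- upstairs function
  set U : Set X := q ⁻¹' O with hU
  have hUo : IsOpen U := hO.preimage hqc
  have hUcne : Uᶜ.Nonempty := by
    obtain ⟨y, hy⟩ := nonempty_compl.2 huniv
    obtain ⟨x, rfl⟩ := hqs y
    exact ⟨x, hy⟩
  set f : X → ℝ := fun x => infDist x Uᶜ with hf
  have hfc : Continuous f := continuous_infDist_pt _
  have hfpos : ∀ x, 0 < f x ↔ x ∈ U := by
    intro x
    rw [hf]
    constructor
    · intro h
      by_contra hx
      have : x ∈ Uᶜ := hx
      simp [infDist_zero_of_mem this] at h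
    · intro h
      exact (hUo.isClosed_compl.notMem_iff_infDist_pos hUcne).1 (by simpa using h)
  -- closed sets upstairs and down
  set C : ℕ → Set X := fun j => {x | (1:ℝ)/(j+1) ≤ f x} with hC
  have hCc : ∀ j, IsClosed (C j) := fun j => isClosed_le continuous_const hfc
  have hFc : ∀ j, IsClosed (q '' C j) := fun j => hqm _ (hCc j)
  have hFO : ∀ j, q '' C j ⊆ O := by
    rintro j y ⟨x, hx, rfl⟩
    have : x ∈ U := (hfpos x).1 (lt_of_lt_of_le (by positivity) hx)
    exact this
  have hdisj : ∀ j, Disjoint Oᶜ (q '' C j) :=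
    fun j => disjoint_compl_left_iff_subset.2 (hFO j)
  have hu : ∀ j, ∃ u : C(Y, ℝ), EqOn u 0 Oᶜ ∧ EqOn u 1 (q '' C j) ∧ ∀ y, u y ∈ Icc (0:ℝ) 1 :=
    fun j => exists_continuous_zero_one_of_isClosed (isClosed_compl_iff.2 hO) (hFc j) (hdisj j)
  choose u hu0 hu1 huI using hu
  have hsumgeo : Summable (fun j : ℕ => (1/2:ℝ)^(j+1)) :=
    summable_geometric_two.mul_right (1/2) |>.congr (fun j => by ring)
  have hbd : ∀ j y, (1/2:ℝ)^(j+1) * u j y ≤ (1/2:ℝ)^(j+1) := by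
    intro j y
    nlinarith [(huI j y).2, (huI j y).1, pow_pos (by norm_num : (0:ℝ) < 1/2) (j+1)]
  have hnn : ∀ j y, (0:ℝ) ≤ (1/2:ℝ)^(j+1) * u j y := by
    intro j y
    have := (huI j y).1
    positivity
  have hsum : ∀ y, Summable (fun j : ℕ => (1/2:ℝ)^(j+1) * u j y) :=
    fun y => Summable.of_nonneg_of_le (fun j => hnn j y) (fun j => hbd j y) hsumgeo
  refine ⟨fun y => ∑' j : ℕ, (1/2:ℝ)^(j+1) * u j y, ?_, ?_, ?_, ?_⟩
  · apply continuous_tsum (fun j => continuous_const.mul (u j).continuous) hsumgeo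
    intro j y
    show ‖(1/2:ℝ)^(j+1) * u j y‖ ≤ (1/2:ℝ)^(j+1)
    rw [Real.norm_eq_abs, abs_of_nonneg (hnn j y)]
    exact hbd j y
  · intro y
    exact tsum_nonneg (fun j => hnn j y)
  · intro y
    calc ∑' j : ℕ, (1/2:ℝ)^(j+1) * u j y ≤ ∑' j : ℕ, (1/2:ℝ)^(j+1) :=
          Summable.tsum_le_tsum (fun j => hbd j y) (hsum y) hsumgeo
      _ ≤ 1 := by
          have h2 : ∑' j : ℕ, (1/2:ℝ)^(j+1) = (∑' j : ℕ, (1/2:ℝ)^j) * (1/2) := by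
            rw [← tsum_mul_right]
            exact tsum_congr fun j => by ring
          rw [h2, tsum_geometric_two]
          norm_num
  · ext y
    simp only [mem_setOf_eq]
    constructor
    · intro h
      by_contra hy
      have hz : ∀ j : ℕ, (1/2:ℝ)^(j+1) * u j y = 0 := by
        intro j
        have : u j y = 0 := hu0 j (by simpa using hy)
        simp [this]
      have : ∑' j : ℕ, (1/2:ℝ)^(j+1) * u j y = 0 := by
        rw [tsum_congr hz, tsum_zero]
      rw [this] at h
      exact lt_irrefl _ h
    · intro hy
      obtain ⟨x, rfl⟩ := hqs y
      have hxU : x ∈ U := hy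
      have hfx : 0 < f x := (hfpos x).2 hxU
      obtain ⟨j, hj⟩ := exists_nat_one_div_lt hfx
      have hxC : x ∈ C j := le_of_lt hj
      have h1 : u j (q x) = 1 := hu1 j ⟨x, hxC, rfl⟩
      have hterm : (0:ℝ) < (1/2:ℝ)^(j+1) * u j (q x) := by
        rw [h1, mul_one]
        positivity
      exact lt_of_lt_of_le hterm (Summable.le_tsum (hsum (q x)) j (fun i _ => hnn i (q x)))

theorem expansion {ι : Type*} (hqc : Continuous q) (hqs : Surjective q) (hqm : IsClosedMap q)
    (hqf : ∀ y, IsCompact (q ⁻¹' {y})) {K O : ι → Set Y} (hKlf : LocallyFinite K)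
    (hKO : ∀ i, K i ⊆ O i) (hOo : ∀ i, IsOpen (O i)) :
    ∃ L : ι → Set Y, (∀ i, IsOpen (L i)) ∧ (∀ i, K i ⊆ L i) ∧ (∀ i, L i ⊆ O i) ∧
      LocallyFinite L := by
  set A : ι → Set X := fun i => q ⁻¹' K i with hA
  have hAlf : LocallyFinite A := hKlf.preimage_continuous hqc
  have h : ∀ x : X, ∃ N : Set X, IsOpen N ∧ x ∈ N ∧ {i | (A i ∩ N).Nonempty}.Finite := by
    intro x
    obtain ⟨N, hN, hfin⟩ := hAlf x
    obtain ⟨N', hN'N, hN'o, hxN'⟩ := _root_.mem_nhds_iff.1 hN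
    exact ⟨N', hN'o, hxN', hfin.subset fun i hi => hi.mono (inter_subset_inter_right _ hN'N)⟩
  choose N hNo hxN hNf using h
  obtain ⟨W, hWo, hWc, hWlf, hWN⟩ := precise_refinement N hNo
    (iUnion_eq_univ_iff.2 fun x => ⟨x, hxN x⟩)
  set M : ι → Set X := fun i => ⋃ (x : X) (_ : (W x ∩ A i).Nonempty), W x with hM
  have hMo : ∀ i, IsOpen (M i) := fun i => isOpen_iUnion fun x => isOpen_iUnion fun _ => hWo x
  have hAM : ∀ i, A i ⊆ M i := by
    intro i a ha
    have : a ∈ ⋃ x, W x := hWc ▸ mem_univ a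
    obtain ⟨x, hx⟩ := mem_iUnion.1 this
    exact mem_iUnion.2 ⟨x, mem_iUnion.2 ⟨⟨a, hx, ha⟩, hx⟩⟩
  have hMlf : LocallyFinite M := by
    intro x₀
    obtain ⟨P, hP, hPf⟩ := hWlf x₀
    refine ⟨P, hP, ?_⟩
    have : {i | (M i ∩ P).Nonempty} ⊆
        ⋃ x ∈ {x | (W x ∩ P).Nonempty}, {i | (A i ∩ N x).Nonempty} := by
      rintro i ⟨z, hzM, hzP⟩
      obtain ⟨x, hx⟩ := mem_iUnion.1 hzM
      obtain ⟨hWA, hzW⟩ := mem_iUnion.1 hx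
      refine mem_biUnion ⟨z, hzW, hzP⟩ ?_
      obtain ⟨w, hw1, hw2⟩ := hWA
      exact ⟨w, hw2, hWN x hw1⟩
    exact (hPf.biUnion fun x _ => hNf x).subset this
  refine ⟨fun i => qsh q (M i) ∩ O i, fun i => (qsh_open hqm (hMo i)).inter (hOo i), ?_,
    fun i => inter_subset_right, ?_⟩
  · intro i y hy
    refine ⟨fun x hx => hAM i ?_, hKO i hy⟩
    have : q x = y := hx
    simpa [hA, this] using hy
  · have := push_loc_fin (B := M) hMlf hqm hqf
    intro y
    obtain ⟨P, hP, hPf⟩ := this y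
    refine ⟨P, hP, hPf.subset ?_⟩
    rintro i ⟨y', ⟨hy', _⟩, hy'P⟩
    obtain ⟨x, rfl⟩ := hqs y'
    exact ⟨q x, ⟨x, hy' rfl, rfl⟩, hy'P⟩

theorem metrizable_of_perfect (hqc : Continuous q) (hqs : Surjective q) (hqm : IsClosedMap q)
    (hqf : ∀ y, IsCompact (q ⁻¹' {y})) : MetrizableSpace Y := by
  classical
  -- locally finite covers of X at scale (1/2)^n
  have hcov : ∀ n : ℕ, ∃ V : X → Set X, (∀ c, IsOpen (V c)) ∧ (⋃ c, V c) = univ ∧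
      LocallyFinite V ∧ ∀ c, V c ⊆ ball c ((1/2)^n) := by
    intro n
    obtain ⟨V, h1, h2, h3, h4⟩ := precise_refinement (fun c : X => ball c ((1/2)^n))
      (fun c => isOpen_ball) (iUnion_eq_univ_iff.2 fun x => ⟨x, mem_ball_self (by positivity)⟩)
    exact ⟨V, h1, h2, h3, h4⟩
  choose V hVo hVc hVlf hVb using hcov
  -- the basic sets
  set Us : ℕ → Finset X → Set X := fun n S => ⋃ c ∈ S, V n c with hUs
  set Ys : ℕ → Finset X → Set Y := fun n S => qsh q (Us n S) with hYs
  set Ks : ℕ → Finset X → Set Y := fun n S =>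
    {y | q ⁻¹' {y} ⊆ Us n S ∧ ∀ c ∈ S, (V n c ∩ q ⁻¹' {y}).Nonempty} with hKs
  have hUso : ∀ n S, IsOpen (Us n S) := fun n S => isOpen_biUnion fun c _ => hVo n c
  have hYso : ∀ n S, IsOpen (Ys n S) := fun n S => qsh_open hqm (hUso n S)
  have hKsYs : ∀ n S, Ks n S ⊆ Ys n S := fun n S y hy => hy.1
  -- covering property
  have hKcov : ∀ n y, ∃ S : Finset X, y ∈ Ks n S := by
    intro n y
    have hfin : {c | (V n c ∩ q ⁻¹' {y}).Nonempty}.Finite :=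
      (hVlf n).finite_nonempty_inter_compact (hqf y)
    refine ⟨hfin.toFinset, ?_, ?_⟩
    · intro x hx
      have : x ∈ ⋃ c, V n c := (hVc n) ▸ mem_univ x
      obtain ⟨c, hc⟩ := mem_iUnion.1 this
      exact mem_biUnion (hfin.mem_toFinset.2 ⟨x, hc, hx⟩) hc
    · intro c hc
      exact hfin.mem_toFinset.1 hc
  -- local finiteness of the Ks family
  have hKslf : ∀ n, LocallyFinite (fun S : Finset X => Ks n S) := by
    intro n y
    obtain ⟨W, hWo, hWK, hWf⟩ := loc_fin_aux (hVlf n) (hqf y)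
    refine ⟨qsh q W, (qsh_open hqm hWo).mem_nhds hWK, ?_⟩
    have hsub : {S : Finset X | (Ks n S ∩ qsh q W).Nonempty} ⊆
        (fun S : Finset X => (S : Set X)) ⁻¹' {b | b ⊆ {c | (V n c ∩ W).Nonempty}} := by
      rintro S ⟨y', hy'K, hy'W⟩ c hc
      obtain ⟨x, hx1, hx2⟩ := hy'K.2 c hc
      exact ⟨x, hx1, hy'W hx2⟩
    exact ((hWf.finite_subsets).preimage (Finset.coe_injective.injOn)).subset hsub
  -- expansions
  have hexp : ∀ n, ∃ L : Finset X → Set Y, (∀ S, IsOpen (L S)) ∧ (∀ S, Ks n S ⊆ L S) ∧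
      (∀ S, L S ⊆ Ys n S) ∧ LocallyFinite L :=
    fun n => expansion hqc hqs hqm hqf (hKslf n) (hKsYs n) (hYso n)
  choose L hLo hKsL hLYs hLlf using hexp
  -- the functions h n S
  have hfun : ∀ n (S : Finset X), ∃ h : Y → ℝ, Continuous h ∧ (∀ y, 0 ≤ h y) ∧ (∀ y, h y ≤ 1) ∧
      {y | 0 < h y} = Ys n S ∩ L n S := by
    intro n S
    obtain ⟨g, hgc, hg0, hg1, hgpos⟩ := pos_on_open hqc hqs hqm (hYso n S)
    obtain ⟨e, hec, he0, he1, hepos⟩ := pos_on_open hqc hqs hqm (hLo n S)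
    refine ⟨fun y => min (g y) (e y), hgc.min hec, fun y => le_min (hg0 y) (he0 y),
      fun y => (min_le_left _ _).trans (hg1 y), ?_⟩
    ext y
    simp only [mem_setOf_eq, lt_min_iff, mem_inter_iff, ← hgpos, ← hepos, mem_setOf_eq]
  choose h hhc hh0 hh1 hhpos using hfun
  have hhL : ∀ n S y, h n S y ≠ 0 → y ∈ L n S := by
    intro n S y hy
    have : 0 < h n S y := lt_of_le_of_ne (hh0 n S y) (Ne.symm hy)
    have : y ∈ Ys n S ∩ L n S := by rw [← hhpos n S]; exact this
    exact this.2
  have hhYs : ∀ n S y, h n S y ≠ 0 → y ∈ Ys n S := by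
    intro n S y hy
    have : 0 < h n S y := lt_of_le_of_ne (hh0 n S y) (Ne.symm hy)
    have : y ∈ Ys n S ∩ L n S := by rw [← hhpos n S]; exact this
    exact this.1
  have hhK : ∀ n S y, y ∈ Ks n S → 0 < h n S y := by
    intro n S y hy
    have : y ∈ Ys n S ∩ L n S := ⟨hKsYs n S hy, hKsL n S hy⟩
    rwa [← hhpos n S] at this
  -- the pseudometrics ρ n
  set ρ : ℕ → Y → Y → ℝ := fun n y y' => ∑ᶠ S : Finset X, |h n S y - h n S y'| with hρ
  have hsupp : ∀ n y y', (support fun S : Finset X => |h n S y - h n S y'|) ⊆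
      {S | y ∈ L n S} ∪ {S | y' ∈ L n S} := by
    intro n y y' S hS
    simp only [mem_support, Ne, abs_eq_zero, sub_eq_zero] at hS
    by_cases h1 : h n S y = 0
    · by_cases h2 : h n S y' = 0
      · exact absurd (h1.trans h2.symm) hS
      · exact Or.inr (hhL n S y' h2)
    · exact Or.inl (hhL n S y h1)
  have hsuppfin : ∀ n y y', (support fun S : Finset X => |h n S y - h n S y'|).Finite := by
    intro n y y'
    exact (((hLlf n).point_finite y).union ((hLlf n).point_finite y')).subset (hsupp n y y')
  -- basic properties of ρ
  have hρsum : ∀ n y y' (J : Finset (Finset X)),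
      (support fun S : Finset X => |h n S y - h n S y'|) ⊆ ↑J →
      ρ n y y' = ∑ S ∈ J, |h n S y - h n S y'| :=
    fun n y y' J hJ => finsum_eq_sum_of_support_subset _ hJ
  have hρ0 : ∀ n y y', 0 ≤ ρ n y y' := by
    intro n y y'
    rw [hρsum n y y' (hsuppfin n y y').toFinset (by simp)]
    exact Finset.sum_nonneg fun S _ => abs_nonneg _
  have hρself : ∀ n y, ρ n y y = 0 := by
    intro n y
    rw [hρsum n y y ∅ (by simp)]
    simp
  have hρcomm : ∀ n y y', ρ n y y' = ρ n y' y := by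
    intro n y y'
    simp only [hρ]
    exact finsum_congr fun S => abs_sub_comm _ _
  have hρtri : ∀ n y y' y'', ρ n y y'' ≤ ρ n y y' + ρ n y' y'' := by
    intro n y y' y''
    set J : Finset (Finset X) := (hsuppfin n y y').toFinset ∪ (hsuppfin n y' y'').toFinset ∪
      (hsuppfin n y y'').toFinset with hJ
    have hJ1 : (support fun S : Finset X => |h n S y - h n S y'|) ⊆ ↑J := by
      intro S hS
      simp only [hJ, Finset.coe_union, Set.Finite.coe_toFinset, mem_union]
      exact Or.inl (Or.inl hS)
    have hJ2 : (support fun S : Finset X => |h n S y' - h n S y''|) ⊆ ↑J := by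
      intro S hS
      simp only [hJ, Finset.coe_union, Set.Finite.coe_toFinset, mem_union]
      exact Or.inl (Or.inr hS)
    have hJ3 : (support fun S : Finset X => |h n S y - h n S y''|) ⊆ ↑J := by
      intro S hS
      simp only [hJ, Finset.coe_union, Set.Finite.coe_toFinset, mem_union]
      exact Or.inr hS
    rw [hρsum n y y'' J hJ3, hρsum n y y' J hJ1, hρsum n y' y'' J hJ2,
      ← Finset.sum_add_distrib]
    exact Finset.sum_le_sum fun S _ => abs_sub_le _ _ _
  have hρsingle : ∀ n S y y', |h n S y - h n S y'| ≤ ρ n y y' := by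
    intro n S y y'
    by_cases hS : |h n S y - h n S y'| = 0
    · rw [hS]; exact hρ0 n y y'
    · rw [hρsum n y y' (hsuppfin n y y').toFinset (by simp)]
      exact Finset.single_le_sum (f := fun S : Finset X => |h n S y - h n S y'|)
        (fun s _ => abs_nonneg _) ((hsuppfin n y y').mem_toFinset.2 hS)
  -- the candidate metric
  set dst : Y → Y → ℝ := fun y y' => ∑' n : ℕ, (1/2:ℝ)^n * min 1 (ρ n y y') with hdst
  have hmin0 : ∀ n y y', (0:ℝ) ≤ min 1 (ρ n y y') := fun n y y' =>
    le_min zero_le_one (hρ0 n y y')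
  have hterm0 : ∀ n y y', (0:ℝ) ≤ (1/2:ℝ)^n * min 1 (ρ n y y') := by
    intro n y y'
    have := hmin0 n y y'
    positivity
  have htermle : ∀ n y y', (1/2:ℝ)^n * min 1 (ρ n y y') ≤ (1/2:ℝ)^n := by
    intro n y y'
    have h1 : min 1 (ρ n y y') ≤ 1 := min_le_left _ _
    nlinarith [pow_pos (by norm_num : (0:ℝ) < 1/2) n, hmin0 n y y']
  have hdsum : ∀ y y', Summable (fun n : ℕ => (1/2:ℝ)^n * min 1 (ρ n y y')) :=
    fun y y' => Summable.of_nonneg_of_le (fun n => hterm0 n y y') (fun n => htermle n y y')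
      summable_geometric_two
  have hdst0 : ∀ y y', 0 ≤ dst y y' := fun y y' => tsum_nonneg (fun n => hterm0 n y y')
  have hdst_self : ∀ y, dst y y = 0 := by
    intro y
    have hz : ∀ n : ℕ, (1/2:ℝ)^n * min 1 (ρ n y y) = 0 := by
      intro n
      rw [hρself n y]
      simp
    show (∑' n : ℕ, (1/2:ℝ)^n * min 1 (ρ n y y)) = 0
    rw [tsum_congr hz, tsum_zero]
  have hdst_comm : ∀ y y', dst y y' = dst y' y := by
    intro y y'
    exact tsum_congr fun n => by rw [hρcomm n y y']
  have hmin_tri : ∀ a b : ℝ, 0 ≤ a → 0 ≤ b → min 1 (a + b) ≤ min 1 a + min 1 b := by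
    intro a b ha hb
    rcases le_total 1 a with h | h
    · have h1 : min 1 a = 1 := min_eq_left h
      have h2 : min 1 (a+b) ≤ 1 := min_le_left _ _
      have h3 : 0 ≤ min 1 b := le_min zero_le_one hb
      linarith
    · rcases le_total 1 b with h' | h'
      · have h1 : min 1 b = 1 := min_eq_left h'
        have h2 : min 1 (a+b) ≤ 1 := min_le_left _ _
        have h3 : 0 ≤ min 1 a := le_min zero_le_one ha
        linarith
      · have h1 : min 1 a = a := min_eq_right h
        have h2 : min 1 b = b := min_eq_right h'
        have h3 : min 1 (a+b) ≤ a + b := min_le_right _ _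
        linarith
  have hdst_tri : ∀ y y' y'', dst y y'' ≤ dst y y' + dst y' y'' := by
    intro y y' y''
    have hterm : ∀ n : ℕ, (1/2:ℝ)^n * min 1 (ρ n y y'') ≤
        (1/2:ℝ)^n * min 1 (ρ n y y') + (1/2:ℝ)^n * min 1 (ρ n y' y'') := by
      intro n
      have h1 : min 1 (ρ n y y'') ≤ min 1 (ρ n y y' + ρ n y' y'') :=
        min_le_min le_rfl (hρtri n y y' y'')
      have h2 := hmin_tri _ _ (hρ0 n y y') (hρ0 n y' y'')
      have h3 : min 1 (ρ n y y'') ≤ min 1 (ρ n y y') + min 1 (ρ n y' y'') := h1.trans h2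
      have h4 : (0:ℝ) ≤ (1/2:ℝ)^n := by positivity
      calc (1/2:ℝ)^n * min 1 (ρ n y y'') ≤
          (1/2:ℝ)^n * (min 1 (ρ n y y') + min 1 (ρ n y' y'')) :=
            mul_le_mul_of_nonneg_left h3 h4
        _ = (1/2:ℝ)^n * min 1 (ρ n y y') + (1/2:ℝ)^n * min 1 (ρ n y' y'') := by ring
    calc dst y y'' ≤ ∑' n : ℕ, ((1/2:ℝ)^n * min 1 (ρ n y y') + (1/2:ℝ)^n * min 1 (ρ n y' y'')) :=
          Summable.tsum_le_tsum hterm (hdsum y y'') ((hdsum y y').add (hdsum y' y''))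
      _ = dst y y' + dst y' y'' := Summable.tsum_add (hdsum y y') (hdsum y' y'')
  have hdst_ge : ∀ n y y', (1/2:ℝ)^n * min 1 (ρ n y y') ≤ dst y y' :=
    fun n y y' => Summable.le_tsum (hdsum y y') n (fun m _ => hterm0 m y y')
  -- KEY 1 : small balls are inside given open sets
  have key1 : ∀ (y : Y) (O : Set Y), IsOpen O → y ∈ O →
      ∃ ε > 0, ∀ y', dst y y' < ε → y' ∈ O := by
    intro y O hO hy
    have hfibO : q ⁻¹' {y} ⊆ q ⁻¹' O := by
      intro x hx
      have : q x = y := hx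
      simp [this, hy]
    obtain ⟨δ, hδ, hth⟩ := (hqf y).exists_thickening_subset_open (hO.preimage hqc) hfibO
    obtain ⟨n, hn⟩ : ∃ n : ℕ, ((1:ℝ)/2)^n < δ/2 :=
      exists_pow_lt_of_lt_one (by positivity) (by norm_num)
    obtain ⟨S, hS⟩ := hKcov n y
    have hc0 : 0 < h n S y := hhK n S y hS
    refine ⟨(1/2:ℝ)^n * min 1 (h n S y), by positivity, ?_⟩
    intro y' hy'
    have h1 : (1/2:ℝ)^n * min 1 (ρ n y y') < (1/2:ℝ)^n * min 1 (h n S y) :=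
      lt_of_le_of_lt (hdst_ge n y y') hy'
    have h2 : min 1 (ρ n y y') < min 1 (h n S y) :=
      lt_of_mul_lt_mul_left h1 (by positivity)
    have h3 : ρ n y y' < h n S y := by
      by_contra hcon
      push_neg at hcon
      exact absurd (min_le_min le_rfl hcon) (not_le.2 h2)
    have habs : |h n S y - h n S y'| < h n S y := lt_of_le_of_lt (hρsingle n S y y') h3
    have hpos : 0 < h n S y' := by
      have := (abs_lt.1 habs).2
      linarith
    have hy'Ys : y' ∈ Ys n S := hhYs n S y' (ne_of_gt hpos)
    have hUsub : Us n S ⊆ q ⁻¹' O := by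
      intro z hz
      obtain ⟨c, hcS, hzc⟩ := mem_iUnion₂.1 hz
      obtain ⟨a, haV, haf⟩ := hS.2 c hcS
      have hza : dist z a < δ := by
        have h5 := mem_ball.1 (hVb n c hzc)
        have h6 := mem_ball.1 (hVb n c haV)
        calc dist z a ≤ dist z c + dist c a := dist_triangle _ _ _
          _ = dist z c + dist a c := by rw [dist_comm c a]
          _ < (1/2:ℝ)^n + (1/2:ℝ)^n := by exact add_lt_add h5 h6
          _ < δ := by linarith
      exact hth (mem_thickening_iff.2 ⟨a, haf, hza⟩)
    obtain ⟨x, hx⟩ := hqs y'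
    have hxf : x ∈ q ⁻¹' {y'} := hx
    have : x ∈ q ⁻¹' O := hUsub (hy'Ys hxf)
    rwa [← hx]
  -- KEY 2 : balls are neighborhoods of their center
  have key2 : ∀ (y : Y) (ε : ℝ), 0 < ε → {y' | dst y y' < ε} ∈ nhds y := by
    intro y ε hε
    obtain ⟨N, hN⟩ : ∃ N : ℕ, 2*((1:ℝ)/2)^N < ε/2 := by
      obtain ⟨N, hN⟩ := exists_pow_lt_of_lt_one (show (0:ℝ) < ε/4 by positivity)
        (by norm_num : (1:ℝ)/2 < 1)
      exact ⟨N, by linarith⟩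
    set ε' : ℝ := ε/(2*(N+1)) with hε'
    have hε'pos : 0 < ε' := by positivity
    -- neighborhoods controlling each scale
    have hP : ∀ n : ℕ, ∃ P : Set Y, IsOpen P ∧ y ∈ P ∧ ∀ y' ∈ P, ρ n y y' < ε' := by
      intro n
      obtain ⟨P', hP'nhd, hP'f⟩ := (hLlf n) y
      have hyP' : y ∈ P' := mem_of_mem_nhds hP'nhd
      obtain ⟨P'', hP''sub, hP''o, hyP''⟩ := _root_.mem_nhds_iff.1 hP'nhd
      set Jn : Finset (Finset X) := hP'f.toFinset with hJn
      set F : Y → ℝ := fun y' => ∑ S ∈ Jn, |h n S y - h n S y'| with hF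
      have hFc : Continuous F := by
        apply continuous_finset_sum
        intro S _
        exact (continuous_const.sub (hhc n S)).abs
      have hFy : F y = 0 := by
        apply Finset.sum_eq_zero
        intro S _
        simp
      refine ⟨P'' ∩ F ⁻¹' Iio ε', hP''o.inter (isOpen_Iio.preimage hFc), ⟨hyP'', ?_⟩, ?_⟩
      · simp only [mem_preimage, mem_Iio, hFy]
        exact hε'pos
      · rintro y' ⟨hy'P, hy'F⟩
        have hsub : (support fun S : Finset X => |h n S y - h n S y'|) ⊆ ↑Jn := by
          intro S hSs
          rcases hsupp n y y' hSs with hc | hc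
          · exact (Set.Finite.mem_toFinset _).2 ⟨y, hc, hyP'⟩
          · exact (Set.Finite.mem_toFinset _).2 ⟨y', hc, hP''sub hy'P⟩
        rw [hρsum n y y' Jn hsub]
        exact hy'F
    choose P hPo hyP hPρ using hP
    set Pall : Set Y := ⋂ n ∈ Finset.range N, P n with hPall
    have hPallo : IsOpen Pall := isOpen_biInter_finset (fun n _ => hPo n)
    have hyPall : y ∈ Pall := mem_iInter₂.2 fun n _ => hyP n
    refine Filter.mem_of_superset (hPallo.mem_nhds hyPall) ?_
    intro y' hy'
    simp only [mem_setOf_eq]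
    -- head/tail split
    have hsplit : ∑ n ∈ Finset.range N, (1/2:ℝ)^n * min 1 (ρ n y y') +
        ∑' n : ℕ, (1/2:ℝ)^(n+N) * min 1 (ρ (n+N) y y') = dst y y' :=
      Summable.sum_add_tsum_nat_add N (hdsum y y')
    have hshiftgeo : Summable (fun n : ℕ => ((1:ℝ)/2)^(n+N)) := by
      apply (summable_geometric_two.mul_right (((1:ℝ)/2)^N)).congr
      intro n
      rw [pow_add]
    have htail : ∑' n : ℕ, (1/2:ℝ)^(n+N) * min 1 (ρ (n+N) y y') ≤ 2*((1:ℝ)/2)^N := by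
      calc ∑' n : ℕ, (1/2:ℝ)^(n+N) * min 1 (ρ (n+N) y y') ≤ ∑' n : ℕ, ((1:ℝ)/2)^(n+N) := by
            apply Summable.tsum_le_tsum (fun n => htermle (n+N) y y') _ hshiftgeo
            apply Summable.of_nonneg_of_le (fun n => hterm0 (n+N) y y')
              (fun n => htermle (n+N) y y') hshiftgeo
        _ = 2*((1:ℝ)/2)^N := by
            have hpa : ∀ n : ℕ, ((1:ℝ)/2)^(n+N) = ((1:ℝ)/2)^n * ((1:ℝ)/2)^N :=
              fun n => pow_add _ _ _
            rw [tsum_congr hpa, tsum_mul_right, tsum_geometric_two]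
    have hhead : ∑ n ∈ Finset.range N, (1/2:ℝ)^n * min 1 (ρ n y y') ≤ N * ε' := by
      have hb : ∀ n ∈ Finset.range N, (1/2:ℝ)^n * min 1 (ρ n y y') ≤ ε' := by
        intro n hn
        have h1 : ρ n y y' < ε' := hPρ n y' (mem_iInter₂.1 hy' n hn)
        have h2 : min 1 (ρ n y y') ≤ ρ n y y' := min_le_right _ _
        have h3 : (1/2:ℝ)^n ≤ 1 := pow_le_one₀ (by norm_num) (by norm_num)
        nlinarith [hmin0 n y y', pow_pos (by norm_num : (0:ℝ) < 1/2) n]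
      calc ∑ n ∈ Finset.range N, (1/2:ℝ)^n * min 1 (ρ n y y') ≤
            ∑ _n ∈ Finset.range N, ε' := Finset.sum_le_sum hb
        _ = N * ε' := by rw [Finset.sum_const, Finset.card_range]; ring
    have hNe : (N:ℝ) * ε' ≤ ε/2 := by
      have hN1 : (0:ℝ) < 2*((N:ℝ)+1) := by positivity
      have hkey : (N:ℝ) * ε' * (2*((N:ℝ)+1)) ≤ (ε/2) * (2*((N:ℝ)+1)) := by
        have heq : (N:ℝ) * ε' * (2*((N:ℝ)+1)) = (N:ℝ)*ε := by
          rw [hε']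
          field_simp
        rw [heq]
        nlinarith [Nat.cast_nonneg (α := ℝ) N, le_of_lt hε]
      exact le_of_mul_le_mul_right hkey hN1
    calc dst y y' = _ + _ := hsplit.symm
      _ ≤ N * ε' + 2*((1:ℝ)/2)^N := add_le_add hhead htail
      _ < ε/2 + ε/2 := add_lt_add_of_le_of_lt hNe hN
      _ = ε := by ring
  -- separation
  have heq0 : ∀ y y', dst y y' = 0 → y = y' := by
    intro y y' h0
    by_contra hne
    have hsing : IsClosed ({y'} : Set Y) := by
      have himg : q '' (q ⁻¹' {y'}) = {y'} := by
        apply Subset.antisymm (image_preimage_subset _ _)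
        intro z hz
        obtain ⟨x, hx⟩ := hqs y'
        exact ⟨x, hx, by rw [hx, mem_singleton_iff.1 hz]⟩
      rw [← himg]
      exact hqm _ (hqf y').isClosed
    obtain ⟨ε, hε, hball⟩ := key1 y {y'}ᶜ hsing.isOpen_compl (by simp [hne])
    exact (hball y' (by rw [h0]; exact hε)) rfl
  -- assemble the metric space
  suffices htop : ∀ s : Set Y, IsOpen s ↔ ∀ x ∈ s, ∃ ε > 0, ∀ y, dst x y < ε → y ∈ s by
    letI mY : MetricSpace Y := MetricSpace.ofDistTopology dst hdst_self hdst_comm hdst_tri htop heq0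
    exact inferInstance
  intro s
  constructor
  · intro hs x hx
    exact key1 x s hs hx
  · intro hs
    rw [isOpen_iff_mem_nhds]
    intro x hx
    obtain ⟨ε, hε, hb⟩ := hs x hx
    exact Filter.mem_of_superset (key2 x ε hε) (fun y' hy' => hb y' hy')

end

/-- For every upper semicontinuous decomposition `D` of a metrizable space `X`,
the decomposition space `X/D` (with the quotient topology) is metrizable. -/
theorem stmt4 {X : Type*} [tX : TopologicalSpace X] [TopologicalSpace.MetrizableSpace X]
    (D : Set (Set X))
    (hcov : ⋃₀ D = Set.univ) (hdisj : D.Pairwise Disjoint)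
    (hne : ∀ A ∈ D, A.Nonempty) (hcpt : ∀ A ∈ D, IsCompact A)
    (husc : ∀ F : Set X, IsClosed F → IsClosed (⋃₀ {A ∈ D | (A ∩ F).Nonempty}))
    (q : X → D) (hq : ∀ x : X, x ∈ (q x : Set X)) :
    @TopologicalSpace.MetrizableSpace D (TopologicalSpace.coinduced q tX) := by
  letI tD : TopologicalSpace D := TopologicalSpace.coinduced q tX
  letI m : MetricSpace X := TopologicalSpace.metrizableSpaceMetric X
  -- q sends a point of a class to that class
  have hqx : ∀ (x : X) (A : Set X) (hA : A ∈ D), x ∈ A → q x = ⟨A, hA⟩ := by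
    intro x A hA hx
    by_contra hne'
    have hAB : (q x : Set X) ≠ A := fun hAB => hne' (Subtype.ext hAB)
    have hd := hdisj (q x).2 hA hAB
    exact (disjoint_left.1 hd) (hq x) hx
  have hfib : ∀ A : D, q ⁻¹' {A} = (A : Set X) := by
    intro A
    ext x
    constructor
    · intro hx
      have : q x = A := hx
      rw [← this]
      exact hq x
    · intro hx
      exact hqx x A.1 A.2 hx
  have hqc : Continuous q := continuous_coinduced_rng
  have hqs : Surjective q := by
    intro A
    obtain ⟨a, ha⟩ := hne A.1 A.2
    exact ⟨a, (hqx a A.1 A.2 ha).trans (by simp)⟩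
  have hqf : ∀ A : D, IsCompact (q ⁻¹' {A}) := by
    intro A
    rw [hfib A]
    exact hcpt A.1 A.2
  have hqm : IsClosedMap q := by
    intro F hF
    have hsat : q ⁻¹' (q '' F) = ⋃₀ {A ∈ D | (A ∩ F).Nonempty} := by
      ext x
      constructor
      · rintro ⟨x', hx'F, hqx'⟩
        refine ⟨(q x : Set X), ⟨(q x).2, ⟨x', ?_, hx'F⟩⟩, hq x⟩
        rw [← hqx']
        exact hq x'
      · rintro ⟨A, ⟨hAD, x', hx'A, hx'F⟩, hxA⟩
        refine ⟨x', hx'F, ?_⟩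
        rw [hqx x' A hAD hx'A, hqx x A hAD hxA]
    have : IsClosed (q ⁻¹' (q '' F)) := by
      rw [hsat]
      exact husc F hF
    rw [← isOpen_compl_iff] at this ⊢
    rw [isOpen_coinduced]
    exact this
  exact metrizable_of_perfect hqc hqs hqm hqf
end

section
/- Every vanishing decomposition of a regular topological space X is upper semicontinuous. -/
/-- Every vanishing decomposition of a regular (T₃) topological space is upper
semicontinuous. -/
theorem stmt7 {X : Type*} [TopologicalSpace X] [T3Space X] (D : Set (Set X))
    (hcov : ⋃₀ D = Set.univ) (hdisj : D.Pairwise Disjoint)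
    (hne : ∀ A ∈ D, A.Nonempty) (hcpt : ∀ A ∈ D, IsCompact A)
    (hvan : ∀ U : Set (Set X), (∀ u ∈ U, IsOpen u) → ⋃₀ U = Set.univ →
      ∀ x : X, ∃ V ∈ nhds x,
        {A ∈ D | (∀ u ∈ U, ¬ A ⊆ u) ∧ (A ∩ V).Nonempty}.Finite) :
    ∀ F : Set X, IsClosed F → IsClosed (⋃₀ {A ∈ D | (A ∩ F).Nonempty}) := by
  intro F hF
  rw [← isOpen_compl_iff, isOpen_iff_mem_nhds]
  intro x hx
  -- x lies in some A₀ ∈ D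
  obtain ⟨A₀, hA₀D, hxA₀⟩ : ∃ A ∈ D, x ∈ A := by
    have : x ∈ ⋃₀ D := hcov.symm ▸ Set.mem_univ x
    exact this
  have hA₀F : Disjoint A₀ F := by
    rw [Set.disjoint_iff_inter_eq_empty]
    by_contra h
    exact hx ⟨A₀, ⟨hA₀D, Set.nonempty_iff_ne_empty.mpr h⟩, hxA₀⟩
  -- separate compact A₀ from closed F
  obtain ⟨W, V, hWopen, hVopen, hA₀W, hFV, hWV⟩ :=
    SeparatedNhds.of_isCompact_isClosed (hcpt A₀ hA₀D) hF hA₀F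
  -- apply vanishing to the cover {Fᶜ, V}
  have hUopen : ∀ u ∈ ({Fᶜ, V} : Set (Set X)), IsOpen u := by
    rintro u (rfl | rfl)
    · exact hF.isOpen_compl
    · exact hVopen
  have hUcov : ⋃₀ ({Fᶜ, V} : Set (Set X)) = Set.univ := by
    ext y
    simp only [Set.sUnion_insert, Set.sUnion_singleton, Set.mem_union, Set.mem_compl_iff,
      Set.mem_univ, iff_true]
    by_cases hy : y ∈ F
    · exact Or.inr (hFV hy)
    · exact Or.inl hy
  obtain ⟨N, hN, hfin⟩ := hvan {Fᶜ, V} hUopen hUcov x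
  set T : Set (Set X) := {A ∈ D | (∀ u ∈ ({Fᶜ, V} : Set (Set X)), ¬ A ⊆ u) ∧ (A ∩ N).Nonempty}
    with hT
  -- each A ∈ T is closed and x ∉ A
  have hxT : ∀ A ∈ T, x ∉ A := by
    rintro A ⟨hAD, hAbad, -⟩ hxA
    have hAne : A ≠ A₀ := by
      rintro rfl
      exact hAbad Fᶜ (Or.inl rfl) (Set.disjoint_left.mp hA₀F)
    exact Set.disjoint_left.mp (hdisj hAD hA₀D hAne) hxA hxA₀
  -- the neighborhood
  have hG : (N ∩ W ∩ ⋂ A ∈ T, Aᶜ) ∈ nhds x := by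
    refine Filter.inter_mem (Filter.inter_mem hN (hWopen.mem_nhds (hA₀W hxA₀))) ?_
    rw [Filter.biInter_mem hfin]
    intro A hAT
    exact (((hcpt A hAT.1).isClosed).isOpen_compl).mem_nhds (hxT A hAT)
  refine Filter.mem_of_superset hG ?_
  rintro y ⟨⟨hyN, hyW⟩, hyT⟩ ⟨A, ⟨hAD, hAF⟩, hyA⟩
  have hAT : A ∈ T := by
    refine ⟨hAD, ?_, ⟨y, hyA, hyN⟩⟩
    rintro u (rfl | rfl) hsub
    · obtain ⟨z, hzA, hzF⟩ := hAF
      exact hsub hzA hzF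
    · exact Set.disjoint_right.mp hWV (hsub hyA) hyW
  exact (Set.mem_iInter₂.mp hyT A hAT) hyA
end

section
/- Every connected, strongly locally homogeneous topological space X is topologically homogeneous: for any two points x, y ∈ X there exists a homeomorphism h : X → X with h(x) = y. -/
/-- Every connected strongly locally homogeneous space is topologically
homogeneous. -/
theorem stmt8 {X : Type*} [TopologicalSpace X] [ConnectedSpace X]
    (hslh : ∀ x : X, ∀ O ∈ nhds x, ∃ U ∈ nhds x, U ⊆ O ∧
      ∀ a ∈ U, ∀ b ∈ U, ∃ h : X ≃ₜ X, h a = b ∧ ∀ z ∉ O, h z = z) :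
    ∀ x y : X, ∃ h : X ≃ₜ X, h x = y := by
  intro x
  set S : Set X := {y | ∃ h : X ≃ₜ X, h x = y} with hS
  have hxS : x ∈ S := ⟨Homeomorph.refl X, rfl⟩
  have hopen : IsOpen S := by
    rw [isOpen_iff_mem_nhds]
    intro y hy
    obtain ⟨h0, hh0⟩ := hy
    obtain ⟨U, hU, _, hUh⟩ := hslh y Set.univ Filter.univ_mem
    filter_upwards [hU] with b hb
    obtain ⟨g, hg, -⟩ := hUh y (mem_of_mem_nhds hU) b hb
    exact ⟨h0.trans g, by simp [hh0, hg]⟩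
  have hclosed : IsClosed S := by
    rw [← isOpen_compl_iff, isOpen_iff_mem_nhds]
    intro y hy
    obtain ⟨U, hU, _, hUh⟩ := hslh y Set.univ Filter.univ_mem
    filter_upwards [hU] with b hb hbS
    obtain ⟨h0, hh0⟩ := hbS
    obtain ⟨g, hg, -⟩ := hUh b hb y (mem_of_mem_nhds hU)
    exact hy ⟨h0.trans g, by simp [hh0, hg]⟩
  have : S = Set.univ := IsClopen.eq_univ ⟨hclosed, hopen⟩ ⟨x, hxS⟩
  intro z
  have : z ∈ S := this ▸ Set.mem_univ z
  exact this
end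

section
/- Let a < b be points of the Cantor set M^1_0 ⊆ [0,1], let r_{[a,b]} : [0,1] → [a,b] be the retraction with r(x)=x on [a,b], r([0,a])={a}, r([b,1])={b}, and let r̄ : [0,1]^k → pr_k^{-1}([a,b]) be the induced map (x_1,…,x_k) ↦ (x_1,…,x_{k-1}, r(x_k)). Then r̄ maps the Menger cube M^k_n into itself, so its restriction is a retraction of M^k_n onto M^k_n ∩ pr_k^{-1}([a,b]). -/
/-- `T^k_n`: points of `{0,1,2}^k` with at most `n` coordinates equal to `1`. -/
def Tcube (n k : ℕ) : Set (Fin k → Fin 3) :=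
  {x | (Finset.univ.filter fun i => x i = 1).card ≤ n}

/-- The coordinatewise base-3 summation map. -/
noncomputable def sMap {k : ℕ} (x : ℕ → (Fin k → Fin 3)) : Fin k → ℝ :=
  fun j => ∑' i : ℕ, (x i j : ℝ) / 3 ^ (i + 1)

/-- The Menger cube `M^k_n ⊆ [0,1]^k`. -/
noncomputable def MengerCube (n k : ℕ) : Set (Fin k → ℝ) :=
  {p | ∃ x : ℕ → (Fin k → Fin 3), (∀ i, x i ∈ Tcube n k) ∧ p = sMap x}

/-- The standard middle-thirds Cantor set `M^1_0`. -/
noncomputable def CantorSet : Set ℝ :=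
  {a | ∃ x : ℕ → Fin 3, (∀ i, x i ≠ 1) ∧ a = ∑' i : ℕ, (x i : ℝ) / 3 ^ (i + 1)}

/-- The induced retraction `r̄`, replacing the last coordinate by its projection
onto `[a,b]`. -/
noncomputable def rbar (k : ℕ) (a b : ℝ) (p : Fin (k + 1) → ℝ) : Fin (k + 1) → ℝ :=
  Function.update p (Fin.last k) (max a (min b (p (Fin.last k))))


lemma update_mem_menger (n k : ℕ) (p : Fin (k + 1) → ℝ) (hp : p ∈ MengerCube n (k + 1))
    (c : ℝ) (hc : c ∈ CantorSet) :
    Function.update p (Fin.last k) c ∈ MengerCube n (k + 1) := by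
  obtain ⟨x, hx, rfl⟩ := hp
  obtain ⟨d, hd, rfl⟩ := hc
  refine ⟨fun i => Function.update (x i) (Fin.last k) (d i), fun i => ?_, ?_⟩
  · refine le_trans (Finset.card_le_card ?_) (hx i)
    intro j hj
    simp only [Finset.mem_filter, Finset.mem_univ, true_and] at hj ⊢
    rcases eq_or_ne j (Fin.last k) with h | h
    · subst h; rw [Function.update_self] at hj; exact absurd hj (hd i)
    · rwa [Function.update_of_ne h] at hj
  · funext j
    rcases eq_or_ne j (Fin.last k) with h | h
    · subst h
      rw [Function.update_self]
      simp [sMap, Function.update_self]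
    · rw [Function.update_of_ne h]
      simp [sMap, Function.update_of_ne h]

/-- For points `a < b` of the Cantor set, `r̄` maps the Menger cube `M^{k+1}_n`
into itself, onto `M^{k+1}_n ∩ pr^{-1}([a,b])`, fixing that intersection:
its restriction is a retraction of `M^{k+1}_n` onto `M^{k+1}_n ∩ pr^{-1}([a,b])`. -/
theorem stmt11 (n k : ℕ) (hk : 2 * n + 2 ≤ k + 1) (a b : ℝ)
    (ha : a ∈ CantorSet) (hb : b ∈ CantorSet) (hab : a < b) :
    (∀ p ∈ MengerCube n (k + 1),
        rbar k a b p ∈ MengerCube n (k + 1) ∧ rbar k a b p (Fin.last k) ∈ Set.Icc a b) ∧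
      ∀ p ∈ MengerCube n (k + 1), p (Fin.last k) ∈ Set.Icc a b → rbar k a b p = p := by
  have fix : ∀ p : Fin (k + 1) → ℝ, p (Fin.last k) ∈ Set.Icc a b → rbar k a b p = p := by
    intro p hp
    have : max a (min b (p (Fin.last k))) = p (Fin.last k) := by
      rw [min_eq_right hp.2, max_eq_right hp.1]
    rw [rbar, this, Function.update_eq_self]
  refine ⟨fun p hp => ?_, fun p _ h => fix p h⟩
  constructor
  · rcases lt_trichotomy (p (Fin.last k)) a with h | h | h
    · have : rbar k a b p = Function.update p (Fin.last k) a := by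
        rw [rbar, min_eq_right (h.trans hab).le, max_eq_left h.le]
      rw [this]; exact update_mem_menger n k p hp a ha
    · have : rbar k a b p = Function.update p (Fin.last k) a := by
        rw [rbar, h, min_eq_right hab.le, max_eq_right le_rfl]
      rw [this]; exact update_mem_menger n k p hp a ha
    · rcases le_or_gt (p (Fin.last k)) b with h2 | h2
      · rw [fix p ⟨h.le, h2⟩]; exact hp
      · have : rbar k a b p = Function.update p (Fin.last k) b := by
          rw [rbar, min_eq_left h2.le, max_eq_right hab.le]
        rw [this]; exact update_mem_menger n k p hp b hb
  · constructor
    · rw [rbar, Function.update_self]; exact le_max_left _ _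
    · rw [rbar, Function.update_self]; exact max_le hab.le (min_le_left _ _)
end
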